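/- Let X and Y be Banach spaces and let f : X → Y be a function which is strictly differentiable at x̄ and such that the strict derivative ∇f(x̄) is surjective. Then there exist a neighborhood V of ȳ := f(x̄), a continuous function x : V → X, and a constant γ > 0 such that f(x(y)) = y and ‖x(y) − x̄‖ ≤ γ‖y − ȳ‖ for every y ∈ V. -/

import Mathlib

open Set Filter Metric Topology NNReal

section Helper
lemma exists_cont_approx_right_inverse
    {X Y : Type*} [NormedAddCommGroup X] [NormedSpace ℝ X] [CompleteSpace X]
    [NormedAddCommGroup Y] [NormedSpace ℝ Y] [CompleteSpace Y]
    (B : X →L[ℝ] Y) (hsurj : Function.Surjective B) :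
    ∃ C : ℝ, 1 ≤ C ∧ ∃ r : Y → X, Continuous r ∧
      ∀ y, ‖r y‖ ≤ C * ‖y‖ ∧ ‖B (r y) - y‖ ≤ (1/4) * ‖y‖ := by
  have hrange : LinearMap.range (B : X →ₗ[ℝ] Y) = ⊤ := (LinearMap.range_eq_top (f := (B : X →ₗ[ℝ] Y))).2 hsurj
  set fsymm := B.nonlinearRightInverseOfSurjective hrange with hfs
  set C0 : ℝ := max (fsymm.nnnorm : ℝ) 1 with hC0
  have hC01 : (1:ℝ) ≤ C0 := le_max_right _ _
  have hC00 : (0:ℝ) < C0 := lt_of_lt_of_le one_pos hC01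
  set C : ℝ := 2 * C0 with hCdef
  have hC1 : (1:ℝ) ≤ C := by nlinarith
  -- selection on the set of nonzero vectors
  set S : Set Y := {y : Y | y ≠ 0} with hS
  set t : S → Set X := fun u => {x | ‖x‖ ≤ C * ‖(u:Y)‖ ∧ ‖B x - (u:Y)‖ ≤ (1/4) * ‖(u:Y)‖} with ht
  have hconv : ∀ u : S, Convex ℝ (t u) := by
    intro u
    have h1 : Convex ℝ (closedBall (0:X) (C * ‖(u:Y)‖)) := convex_closedBall _ _
    have h2 : Convex ℝ ((⇑B) ⁻¹' closedBall ((u:Y)) ((1/4) * ‖(u:Y)‖)) :=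
      (convex_closedBall _ _).linear_preimage (B : X →ₗ[ℝ] Y)
    have : t u = closedBall (0:X) (C * ‖(u:Y)‖) ∩ (⇑B) ⁻¹' closedBall ((u:Y)) ((1/4) * ‖(u:Y)‖) := by
      ext x
      simp [ht, mem_closedBall_zero_iff, Metric.mem_closedBall, dist_eq_norm]
    rw [this]
    exact h1.inter h2
  have hloc : ∀ u : S, ∃ c : X, ∀ᶠ v in 𝓝 u, c ∈ t v := by
    rintro ⟨y, hy⟩
    have hy0 : (0:ℝ) < ‖y‖ := norm_pos_iff.2 hy
    refine ⟨fsymm y, ?_⟩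
    have hball : Metric.ball (⟨y, hy⟩ : S) (‖y‖/8) ∈ 𝓝 (⟨y, hy⟩ : S) :=
      Metric.ball_mem_nhds _ (by positivity)
    filter_upwards [hball] with v hv
    rcases v with ⟨z, hz⟩
    have hdist : ‖z - y‖ < ‖y‖/8 := by
      have := hv
      rw [Metric.mem_ball] at this
      simpa [Subtype.dist_eq, dist_eq_norm] using this
    have hz2 : ‖y‖/2 ≤ ‖z‖ := by
      have := norm_sub_norm_le y z
      have h2 : ‖y - z‖ < ‖y‖/8 := by rwa [norm_sub_rev] at hdist
      linarith
    have goal1 : ‖fsymm y‖ ≤ C * ‖z‖ := by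
      have h1 : ‖fsymm y‖ ≤ (fsymm.nnnorm : ℝ) * ‖y‖ := fsymm.bound y
      have h2 : (fsymm.nnnorm : ℝ) ≤ C0 := le_max_left _ _
      have : ‖fsymm y‖ ≤ C0 * ‖y‖ := le_trans h1 (by nlinarith [norm_nonneg y])
      calc ‖fsymm y‖ ≤ C0 * ‖y‖ := this
        _ ≤ C0 * (2 * ‖z‖) := by nlinarith
        _ = C * ‖z‖ := by ring
    have goal2 : ‖B (fsymm y) - z‖ ≤ (1/4) * ‖z‖ := by
      have hb : B (fsymm y) = y := fsymm.right_inv y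
      rw [hb, ← norm_sub_rev]
      calc ‖z - y‖ ≤ ‖y‖/8 := hdist.le
        _ ≤ (1/4) * (‖y‖/2) := by linarith
        _ ≤ (1/4) * ‖z‖ := by linarith
    exact ⟨goal1, goal2⟩
  obtain ⟨g, hg⟩ := exists_continuous_forall_mem_convex_of_local_const hconv hloc
  classical
  set r : Y → X := fun y => if h : y = 0 then 0 else g ⟨y, h⟩ with hr
  have hrbound : ∀ y, ‖r y‖ ≤ C * ‖y‖ ∧ ‖B (r y) - y‖ ≤ (1/4) * ‖y‖ := by
    intro y
    by_cases h : y = 0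
    · subst h; simp [hr]
    · have h2 := hg ⟨y, h⟩
      rw [ht] at h2
      simp only [hr, dif_neg h]
      exact h2
  refine ⟨C, hC1, r, ?_, hrbound⟩
  rw [continuous_iff_continuousAt]
  intro y0
  by_cases h0 : y0 = 0
  · subst h0
    have hr0 : r 0 = 0 := by simp [hr]
    rw [ContinuousAt, hr0]
    apply squeeze_zero_norm (fun y => (hrbound y).1)
    have : Tendsto (fun y : Y => C * ‖y‖) (𝓝 0) (𝓝 (C * ‖(0:Y)‖)) :=
      (continuous_const.mul continuous_norm).tendsto 0
    simpa using this
  · have hopen : IsOpen S := isOpen_compl_singleton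
    have hco : ContinuousOn r S := by
      rw [continuousOn_iff_continuous_restrict]
      have : S.domRestrict r = fun u : S => g u := by
        funext u
        simp [hr, Set.domRestrict_apply, dif_neg u.2]
      rw [this]
      exact g.continuous
    exact hco.continuousAt (hopen.mem_nhds h0)

private noncomputable def iterSeq {X Y : Type*} [NormedAddCommGroup X] [NormedAddCommGroup Y]
    (f : X → Y) (r : Y → X) (xbar : X) : ℕ → Y → X
  | 0 => fun _ => xbar
  | (n+1) => fun y => iterSeq f r xbar n y + r (y - f (iterSeq f r xbar n y))

end Helper

set_option maxHeartbeats 1600000 in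
/-- Inverse function theorem with surjective strict derivative in Banach spaces:
if `f` is strictly differentiable at `xbar` with surjective strict derivative `B`,
then there exist a neighborhood `V` of `ybar := f xbar`, a continuous function
`s : V → X` and a constant `γ > 0` such that `f (s y) = y` and
`‖s y - xbar‖ ≤ γ‖y - ybar‖` for every `y ∈ V`. -/
theorem continuous_calm_inverse_selection_of_surjective_strict_deriv
    {X Y : Type*} [NormedAddCommGroup X] [NormedSpace ℝ X] [CompleteSpace X]
    [NormedAddCommGroup Y] [NormedSpace ℝ Y] [CompleteSpace Y]
    (f : X → Y) (xbar : X) (B : X →L[ℝ] Y)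
    (hf : HasStrictFDerivAt f B xbar) (hsurj : Function.Surjective B) :
    ∃ V ∈ nhds (f xbar), ∃ s : Y → X, ∃ γ : ℝ, 0 < γ ∧
      ContinuousOn s V ∧
      ∀ y ∈ V, f (s y) = y ∧ ‖s y - xbar‖ ≤ γ * ‖y - f xbar‖ := by
  obtain ⟨C, hC1, r, hrc, hr⟩ := exists_cont_approx_right_inverse B hsurj
  have hC0 : (0:ℝ) < C := lt_of_lt_of_le one_pos hC1
  set ybar := f xbar with hybar
  set c : ℝ≥0 := Real.toNNReal (1/(4*C)) with hc
  have hcpos : 0 < c := Real.toNNReal_pos.2 (by positivity)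
  have hcval : (c:ℝ) = 1/(4*C) := Real.coe_toNNReal _ (by positivity)
  obtain ⟨sset, hsnhds, happrox⟩ := hf.approximates_deriv_on_nhds (Or.inr hcpos)
  obtain ⟨R, hR0, hRsub⟩ := Metric.mem_nhds_iff.1 hsnhds
  have happB : ApproximatesLinearOn f B (Metric.ball xbar R) c := happrox.mono_set hRsub
  have happ : ∀ x ∈ Metric.ball xbar R, ∀ x' ∈ Metric.ball xbar R,
      ‖f x - f x' - B (x - x')‖ ≤ (1/(4*C)) * ‖x - x'‖ := by
    intro x hx x' hx'
    have := happB x hx x' hx'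
    rwa [hcval] at this
  set δ : ℝ := R/(4*C) with hδ
  have hδ0 : 0 < δ := by positivity
  set V := Metric.ball ybar δ with hV
  have hδle : 2*C*δ = R/2 := by rw [hδ]; field_simp; ring
  have h2CaR : ∀ a : ℝ, a < δ → 2*C*a < R := by
    intro a haδ
    have h := mul_lt_mul_of_pos_left haδ (show (0:ℝ) < 2*C by positivity)
    ring_nf at h ⊢
    ring_nf at hδle
    linarith
  have hshrink : ∀ a p : ℝ, 0 ≤ a → 0 ≤ p → p ≤ 1 → 2*C*(1-p)*a ≤ 2*C*a := by
    intro a p ha hp hp1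
    nlinarith [mul_nonneg (mul_nonneg hC0.le hp) ha]
  -- the iteration
  have hu0 : ∀ y : Y, iterSeq f r xbar 0 y = xbar := fun _ => rfl
  have husucc : ∀ (n : ℕ) (y : Y), iterSeq f r xbar (n+1) y
      = iterSeq f r xbar n y + r (y - f (iterSeq f r xbar n y)) := fun _ _ => rfl
  -- key induction
  have key : ∀ y ∈ V, ∀ n, ‖y - f (iterSeq f r xbar n y)‖ ≤ (1/2)^n * ‖y - ybar‖ ∧
      ‖iterSeq f r xbar n y - xbar‖ ≤ 2*C*(1 - (1/2)^n)*‖y - ybar‖ := by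
    intro y hy
    have hyδ : ‖y - ybar‖ < δ := by
      rw [hV, Metric.mem_ball, dist_eq_norm] at hy
      exact hy
    have ha0 : (0:ℝ) ≤ ‖y - ybar‖ := norm_nonneg _
    intro n
    induction n with
    | zero =>
      constructor
      · rw [hu0, ← hybar]
        simp
      · rw [hu0]
        simp
    | succ n ih =>
      obtain ⟨ih1, ih2⟩ := ih
      have hpow0 : (0:ℝ) ≤ (1/2:ℝ)^n := by positivity
      have hpow1 : (1/2:ℝ)^n ≤ 1 := pow_le_one₀ (by norm_num) (by norm_num)
      have hrb1 : ‖r (y - f (iterSeq f r xbar n y))‖ ≤ C * ‖y - f (iterSeq f r xbar n y)‖ := (hr _).1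
      have hrb2 : ‖B (r (y - f (iterSeq f r xbar n y))) - (y - f (iterSeq f r xbar n y))‖ ≤ (1/4) * ‖y - f (iterSeq f r xbar n y)‖ := (hr _).2
      have hin1 : iterSeq f r xbar n y ∈ Metric.ball xbar R := by
        rw [Metric.mem_ball, dist_eq_norm]
        calc ‖iterSeq f r xbar n y - xbar‖ ≤ 2*C*(1 - (1/2)^n)*‖y - ybar‖ := ih2
          _ ≤ 2*C*‖y - ybar‖ := hshrink _ _ ha0 hpow0 hpow1
          _ < R := h2CaR _ hyδ
      have hnewb : ‖iterSeq f r xbar (n+1) y - xbar‖ ≤ 2*C*(1 - (1/2)^(n+1))*‖y - ybar‖ := by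
        have h1 : iterSeq f r xbar (n+1) y - xbar = (iterSeq f r xbar n y - xbar) + r (y - f (iterSeq f r xbar n y)) := by
          rw [husucc]; abel
        rw [h1]
        have h2 : ‖(iterSeq f r xbar n y - xbar) + r (y - f (iterSeq f r xbar n y))‖ ≤ ‖iterSeq f r xbar n y - xbar‖ + ‖r (y - f (iterSeq f r xbar n y))‖ :=
          norm_add_le _ _
        have h3 : ‖r (y - f (iterSeq f r xbar n y))‖ ≤ C * ((1/2)^n * ‖y - ybar‖) :=
          hrb1.trans (mul_le_mul_of_nonneg_left ih1 hC0.le)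
        have hps : (1/2:ℝ)^(n+1) = (1/2)^n * (1/2) := pow_succ _ _
        rw [hps]
        nlinarith
      have hin2 : iterSeq f r xbar (n+1) y ∈ Metric.ball xbar R := by
        rw [Metric.mem_ball, dist_eq_norm]
        have hpow0' : (0:ℝ) ≤ (1/2:ℝ)^(n+1) := by positivity
        have hpow1' : (1/2:ℝ)^(n+1) ≤ 1 := pow_le_one₀ (by norm_num) (by norm_num)
        calc ‖iterSeq f r xbar (n+1) y - xbar‖ ≤ 2*C*(1 - (1/2)^(n+1))*‖y - ybar‖ := hnewb
          _ ≤ 2*C*‖y - ybar‖ := hshrink _ _ ha0 hpow0' hpow1'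
          _ < R := h2CaR _ hyδ
      constructor
      · -- residual estimate
        have hin2' : iterSeq f r xbar n y + r (y - f (iterSeq f r xbar n y)) ∈ Metric.ball xbar R := by
          have := hin2
          rwa [husucc] at this
        have heq : y - f (iterSeq f r xbar n y + r (y - f (iterSeq f r xbar n y)))
            = ((y - f (iterSeq f r xbar n y)) - B (r (y - f (iterSeq f r xbar n y))))
              - (f (iterSeq f r xbar n y + r (y - f (iterSeq f r xbar n y))) - f (iterSeq f r xbar n y) - B (r (y - f (iterSeq f r xbar n y)))) := by
          abel
        have happl := happ _ hin2' _ hin1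
        have hsub : (iterSeq f r xbar n y + r (y - f (iterSeq f r xbar n y))) - iterSeq f r xbar n y = r (y - f (iterSeq f r xbar n y)) :=
          add_sub_cancel_left _ _
        rw [hsub] at happl
        calc ‖y - f (iterSeq f r xbar (n+1) y)‖
            = ‖((y - f (iterSeq f r xbar n y)) - B (r (y - f (iterSeq f r xbar n y))))
              - (f (iterSeq f r xbar n y + r (y - f (iterSeq f r xbar n y))) - f (iterSeq f r xbar n y) - B (r (y - f (iterSeq f r xbar n y))))‖ := by
              rw [husucc, heq]
          _ ≤ ‖(y - f (iterSeq f r xbar n y)) - B (r (y - f (iterSeq f r xbar n y)))‖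
              + ‖f (iterSeq f r xbar n y + r (y - f (iterSeq f r xbar n y))) - f (iterSeq f r xbar n y) - B (r (y - f (iterSeq f r xbar n y)))‖ :=
              norm_sub_le _ _
          _ ≤ (1/4) * ‖y - f (iterSeq f r xbar n y)‖ + (1/(4*C)) * ‖r (y - f (iterSeq f r xbar n y))‖ := by
              have h1 : ‖(y - f (iterSeq f r xbar n y)) - B (r (y - f (iterSeq f r xbar n y)))‖ ≤ (1/4) * ‖y - f (iterSeq f r xbar n y)‖ := by
                rw [norm_sub_rev] at hrb2
                exact hrb2
              exact add_le_add h1 happl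
          _ ≤ (1/4) * ‖y - f (iterSeq f r xbar n y)‖ + (1/(4*C)) * (C * ‖y - f (iterSeq f r xbar n y)‖) := by
              have : (0:ℝ) ≤ 1/(4*C) := by positivity
              nlinarith
          _ = (1/2) * ‖y - f (iterSeq f r xbar n y)‖ := by field_simp; ring
          _ ≤ (1/2) * ((1/2)^n * ‖y - ybar‖) := by nlinarith
          _ = (1/2)^(n+1) * ‖y - ybar‖ := by ring
      · exact hnewb
  -- step bounds and telescoping
  have hstepb : ∀ y ∈ V, ∀ n, ‖iterSeq f r xbar (n+1) y - iterSeq f r xbar n y‖ ≤ (C*δ) * (1/2)^n := by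
    intro y hy n
    have hyδ : ‖y - ybar‖ < δ := by
      rw [hV, Metric.mem_ball, dist_eq_norm] at hy
      exact hy
    have h1 := (key y hy n).1
    have hdd : iterSeq f r xbar (n+1) y - iterSeq f r xbar n y = r (y - f (iterSeq f r xbar n y)) := by
      rw [husucc]; abel
    rw [hdd]
    have hpow0 : (0:ℝ) ≤ (1/2:ℝ)^n := by positivity
    calc ‖r (y - f (iterSeq f r xbar n y))‖ ≤ C * ‖y - f (iterSeq f r xbar n y)‖ := (hr _).1
      _ ≤ C * ((1/2)^n * ‖y - ybar‖) := mul_le_mul_of_nonneg_left h1 hC0.le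
      _ ≤ (C*δ) * (1/2)^n := by
          have h := mul_le_mul_of_nonneg_left hyδ.le (mul_nonneg hC0.le hpow0)
          nlinarith [h]
  have htel : ∀ y ∈ V, ∀ n m, n ≤ m → ‖iterSeq f r xbar m y - iterSeq f r xbar n y‖ ≤ 2*(C*δ)*((1/2)^n - (1/2)^m) := by
    intro y hy n m hnm
    induction m, hnm using Nat.le_induction with
    | base => simp
    | succ m hm ih =>
      have h1 : ‖iterSeq f r xbar (m+1) y - iterSeq f r xbar n y‖ ≤ ‖iterSeq f r xbar (m+1) y - iterSeq f r xbar m y‖ + ‖iterSeq f r xbar m y - iterSeq f r xbar n y‖ := by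
        have := dist_triangle (iterSeq f r xbar (m+1) y) (iterSeq f r xbar m y) (iterSeq f r xbar n y)
        simpa [dist_eq_norm] using this
      have h2 := hstepb y hy m
      have hps : (1/2:ℝ)^(m+1) = (1/2)^m * (1/2) := pow_succ _ _
      have heq : (C*δ) * (1/2:ℝ)^m + 2*(C*δ)*((1/2)^n - (1/2)^m)
          = 2*(C*δ)*((1/2)^n - (1/2)^m * (1/2)) := by ring
      rw [hps]
      linarith
  -- limit function
  have hcauchy : ∀ y ∈ V, CauchySeq (fun n => iterSeq f r xbar n y) := by
    intro y hy
    apply cauchySeq_of_le_geometric (1/2) (C*δ) (by norm_num)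
    intro n
    rw [dist_eq_norm, norm_sub_rev]
    exact hstepb y hy n
  set s : Y → X := fun y => limUnder atTop (fun n => iterSeq f r xbar n y) with hs
  have hlim : ∀ y ∈ V, Tendsto (fun n => iterSeq f r xbar n y) atTop (𝓝 (s y)) := by
    intro y hy
    exact (hcauchy y hy).tendsto_limUnder
  have hdistlim : ∀ y ∈ V, ∀ n, ‖s y - iterSeq f r xbar n y‖ ≤ 2*(C*δ)*(1/2)^n := by
    intro y hy n
    have htnorm : Tendsto (fun m => ‖iterSeq f r xbar m y - iterSeq f r xbar n y‖) atTop (𝓝 ‖s y - iterSeq f r xbar n y‖) :=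
      ((hlim y hy).sub tendsto_const_nhds).norm
    apply le_of_tendsto htnorm
    filter_upwards [eventually_ge_atTop n] with m hm
    have hpm : (0:ℝ) ≤ (1/2:ℝ)^m := by positivity
    have := htel y hy n m hm
    have hK : (0:ℝ) ≤ C*δ := by positivity
    nlinarith
  -- uniform convergence and continuity
  have hfc : ContinuousOn f (Metric.ball xbar R) := happB.continuousOn
  have hmaps : ∀ n, Set.MapsTo (iterSeq f r xbar n) V (Metric.ball xbar R) := by
    intro n y hy
    have hyδ : ‖y - ybar‖ < δ := by
      rw [hV, Metric.mem_ball, dist_eq_norm] at hy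
      exact hy
    have h2 := (key y hy n).2
    have hpow0 : (0:ℝ) ≤ (1/2:ℝ)^n := by positivity
    have hpow1 : (1/2:ℝ)^n ≤ 1 := pow_le_one₀ (by norm_num) (by norm_num)
    have ha0 : (0:ℝ) ≤ ‖y - ybar‖ := norm_nonneg _
    rw [Metric.mem_ball, dist_eq_norm]
    calc ‖iterSeq f r xbar n y - xbar‖ ≤ 2*C*(1 - (1/2)^n)*‖y - ybar‖ := h2
      _ ≤ 2*C*‖y - ybar‖ := hshrink _ _ ha0 hpow0 hpow1
      _ < R := h2CaR _ hyδ
  have hucont : ∀ n, ContinuousOn (iterSeq f r xbar n) V := by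
    intro n
    induction n with
    | zero =>
      have : iterSeq f r xbar 0 = fun _ : Y => xbar := rfl
      rw [this]
      exact continuousOn_const
    | succ n ih =>
      have huu : iterSeq f r xbar (n+1) = fun y => iterSeq f r xbar n y + r (y - f (iterSeq f r xbar n y)) := rfl
      rw [huu]
      exact ih.add (hrc.comp_continuousOn (continuousOn_id.sub (hfc.comp ih (hmaps n))))
  have hTU : TendstoUniformlyOn (iterSeq f r xbar) s atTop V := by
    rw [Metric.tendstoUniformlyOn_iff]
    intro ε hε
    have hgeo : Tendsto (fun n : ℕ => 2*(C*δ)*(1/2:ℝ)^n) atTop (𝓝 0) := by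
      have h0 : Tendsto (fun n : ℕ => (1/2:ℝ)^n) atTop (𝓝 0) :=
        tendsto_pow_atTop_nhds_zero_of_lt_one (by norm_num) (by norm_num)
      simpa using h0.const_mul (2*(C*δ))
    filter_upwards [hgeo.eventually (gt_mem_nhds hε)] with n hn y hy
    rw [dist_eq_norm]
    exact lt_of_le_of_lt (hdistlim y hy n) hn
  have hscont : ContinuousOn s V := hTU.continuousOn (Filter.Eventually.of_forall hucont).frequently
  refine ⟨V, Metric.ball_mem_nhds _ hδ0, s, 2*C, by positivity, hscont, ?_⟩
  intro y hy
  have hyδ : ‖y - ybar‖ < δ := by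
    rw [hV, Metric.mem_ball, dist_eq_norm] at hy
    exact hy
  have hbound : ∀ n, ‖iterSeq f r xbar n y - xbar‖ ≤ 2*C*‖y - ybar‖ := by
    intro n
    have h2 := (key y hy n).2
    have hpow0 : (0:ℝ) ≤ (1/2:ℝ)^n := by positivity
    have ha0 : (0:ℝ) ≤ ‖y - ybar‖ := norm_nonneg _
    exact h2.trans (hshrink _ _ ha0 hpow0 (pow_le_one₀ (by norm_num) (by norm_num)))
  have htnorm : Tendsto (fun n => ‖iterSeq f r xbar n y - xbar‖) atTop (𝓝 ‖s y - xbar‖) :=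
    ((hlim y hy).sub tendsto_const_nhds).norm
  have hsb : ‖s y - xbar‖ ≤ 2*C*‖y - ybar‖ :=
    le_of_tendsto htnorm (Filter.Eventually.of_forall hbound)
  have hsball : s y ∈ Metric.ball xbar R := by
    rw [Metric.mem_ball, dist_eq_norm]
    exact lt_of_le_of_lt hsb (h2CaR _ hyδ)
  refine ⟨?_, hsb⟩
  have h1 : Tendsto (fun n => f (iterSeq f r xbar n y)) atTop (𝓝 (f (s y))) :=
    Filter.Tendsto.comp (hfc.continuousAt (isOpen_ball.mem_nhds hsball)) (hlim y hy)
  have h2 : Tendsto (fun n => f (iterSeq f r xbar n y)) atTop (𝓝 y) := by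
    have hz : Tendsto (fun n => f (iterSeq f r xbar n y) - y) atTop (𝓝 0) := by
      apply squeeze_zero_norm (a := fun n : ℕ => (1/2:ℝ)^n * ‖y - ybar‖)
      · intro n
        rw [norm_sub_rev]
        exact (key y hy n).1
      · have h0 : Tendsto (fun n : ℕ => (1/2:ℝ)^n) atTop (𝓝 0) :=
          tendsto_pow_atTop_nhds_zero_of_lt_one (by norm_num) (by norm_num)
        simpa using h0.mul_const ‖y - ybar‖
    have h3 : Tendsto (fun n => (f (iterSeq f r xbar n y) - y) + y) atTop (𝓝 (0 + y)) :=
      hz.add tendsto_const_nhds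
    rw [zero_add] at h3
    have h4 : (fun n => (f (iterSeq f r xbar n y) - y) + y)
        = fun n => f (iterSeq f r xbar n y) := by
      funext n; abel
    rwa [h4] at h3
  exact tendsto_nhds_unique h1 h2
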